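/- Let K be an algebraic number field and let a, b, c be nonzero elements of O_K that are pairwise coprime (no prime ideal of O_K contains two of them) and satisfy a + b = c. Then max(N(a), N(b), N(c)) ≤ H_K(a, b, c), where N(x) = |N_{K/ℚ}(x)| is the absolute value of the field norm. -/

import Mathlib

open NumberField IsDedekindDomain

/-- The normalized absolute value attached to the finite place `v` of `K`:
`‖x‖_v = N(𝔭_v) ^ (-ord_{𝔭_v} x)`, and `‖0‖_v = 0`. -/
noncomputable def finNorm (K : Type*) [Field K] [NumberField K]
    (v : HeightOneSpectrum (𝓞 K)) (x : K) : ℝ :=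
  ((WithZeroMulInt.toNNReal
      (show ((Ideal.absNorm v.asIdeal : NNReal)) ≠ 0 by
        simp [Ideal.absNorm_eq_zero_iff, v.ne_bot])
      (v.valuation K x) : NNReal) : ℝ)

/-- The height `H_K(a,b,c) = ∏_{v ∈ M_K} max(‖a‖_v, ‖b‖_v, ‖c‖_v)`, where for an infinite
place `v` the local factor is `|σ_v ·|` (real `v`) or `|σ_v ·|²` (complex `v`). -/
noncomputable def heightTriple (K : Type*) [Field K] [NumberField K] (a b c : K) : ℝ :=
  (∏ v : InfinitePlace K, max (max (v a ^ v.mult) (v b ^ v.mult)) (v c ^ v.mult)) *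
  (∏ᶠ v : HeightOneSpectrum (𝓞 K),
    max (max (finNorm K v a) (finNorm K v b)) (finNorm K v c))

/-- The ramification index `e(𝔭|p)` of a finite place over the rational prime below it. -/
noncomputable def ramIdx (K : Type*) [Field K] [NumberField K]
    (v : HeightOneSpectrum (𝓞 K)) : ℕ :=
  Ideal.ramificationIdx'
    (Ideal.comap (algebraMap ℤ (𝓞 K)) v.asIdeal) v.asIdeal

/-- The ramified support `Q_K(a,b,c) = ∏ N(𝔭)^{e(𝔭|p)}`, the product over those primes `𝔭`
for which `‖a‖_𝔭, ‖b‖_𝔭, ‖c‖_𝔭` are not all equal. -/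
noncomputable def ramSupportTriple (K : Type*) [Field K] [NumberField K] (a b c : K) : ℝ :=
  ∏ᶠ v : HeightOneSpectrum (𝓞 K),
    if ¬ (finNorm K v a = finNorm K v b ∧ finNorm K v b = finNorm K v c) then
      (Ideal.absNorm v.asIdeal : ℝ) ^ ramIdx K v
    else 1


section Helpers
variable {K : Type*} [Field K] [NumberField K]

lemma one_lt_absNorm' (v : HeightOneSpectrum (𝓞 K)) :
    (1 : NNReal) < (Ideal.absNorm v.asIdeal : NNReal) := by
  rw [Nat.one_lt_cast]
  rcases Nat.lt_or_ge (Ideal.absNorm v.asIdeal) 2 with h | h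
  · interval_cases h' : Ideal.absNorm v.asIdeal
    · exact absurd (Ideal.absNorm_eq_zero_iff.mp h') v.ne_bot
    · exact absurd (Ideal.absNorm_eq_one_iff.mp h') v.isPrime.ne_top
  · omega

lemma finNorm_le_one' (v : HeightOneSpectrum (𝓞 K)) (x : 𝓞 K) : finNorm K v (x : K) ≤ 1 := by
  have h := (WithZeroMulInt.toNNReal_le_one_iff (one_lt_absNorm' v)).mpr
    (show v.valuation K ((x : 𝓞 K) : K) ≤ 1 from v.valuation_le_one (K := K) x)
  exact_mod_cast h

lemma finNorm_eq_one' (v : HeightOneSpectrum (𝓞 K)) {x : 𝓞 K} (hx : x ∉ v.asIdeal) :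
    finNorm K v (x : K) = 1 := by
  have hval : v.valuation K (algebraMap (𝓞 K) K x) = 1 := by
    rcases lt_or_eq_of_le (show v.valuation K ((x : 𝓞 K) : K) ≤ 1 from v.valuation_le_one (K := K) x)
      with h | h
    · exact absurd (Ideal.dvd_span_singleton.mp
        ((v.valuation_lt_one_iff_dvd (K := K) x).mp h)) hx
    · exact h
  show ((WithZeroMulInt.toNNReal _ (v.valuation K (x : K)) : NNReal) : ℝ) = 1
  rw [show ((x : K)) = algebraMap (𝓞 K) K x from rfl, hval, map_one, NNReal.coe_one]

end Helpers

/-- **Lemma (lower bound for the height).**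
If `a, b, c` are nonzero elements of `𝓞 K`, pairwise coprime in the sense that no nonzero
prime ideal contains two of them, and `a + b = c`, then
`max(N(a), N(b), N(c)) ≤ H_K(a, b, c)`. -/
theorem max_norm_le_heightTriple
    {K : Type*} [Field K] [NumberField K]
    (a b c : 𝓞 K) (ha : a ≠ 0) (hb : b ≠ 0) (hc : c ≠ 0)
    (hcop : ∀ 𝔭 : Ideal (𝓞 K), 𝔭.IsPrime → 𝔭 ≠ ⊥ →
      ¬ (a ∈ 𝔭 ∧ b ∈ 𝔭) ∧ ¬ (a ∈ 𝔭 ∧ c ∈ 𝔭) ∧ ¬ (b ∈ 𝔭 ∧ c ∈ 𝔭))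
    (habc : a + b = c) :
    max (max ((Algebra.norm ℤ a).natAbs : ℝ) ((Algebra.norm ℤ b).natAbs : ℝ))
        ((Algebra.norm ℤ c).natAbs : ℝ) ≤ heightTriple K (a : K) (b : K) (c : K) := by
  have hfinmax : ∀ v : HeightOneSpectrum (𝓞 K),
      max (max (finNorm K v (a:K)) (finNorm K v (b:K))) (finNorm K v (c:K)) = 1 := by
    intro v
    obtain ⟨hab, hac, hbc⟩ := hcop v.asIdeal v.isPrime v.ne_bot
    have h1 : finNorm K v (a:K) = 1 ∨ finNorm K v (b:K) = 1 := by
      by_cases hA : a ∈ v.asIdeal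
      · exact Or.inr (finNorm_eq_one' v (fun hB => hab ⟨hA, hB⟩))
      · exact Or.inl (finNorm_eq_one' v hA)
    refine le_antisymm (max_le (max_le (finNorm_le_one' v a) (finNorm_le_one' v b))
      (finNorm_le_one' v c)) ?_
    rcases h1 with h | h
    · exact h ▸ le_max_of_le_left (le_max_left _ _)
    · exact h ▸ le_max_of_le_left (le_max_right _ _)
  rw [heightTriple, finprod_congr hfinmax, finprod_one, mul_one]
  have key : ∀ x : 𝓞 K,
      ((Algebra.norm ℤ x).natAbs : ℝ) = ∏ w : InfinitePlace K, w (x:K) ^ w.mult := by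
    intro x
    rw [NumberField.InfinitePlace.prod_eq_abs_norm, ← Algebra.coe_norm_int]
    push_cast
    rw [Nat.cast_natAbs, Int.cast_abs]
  refine max_le (max_le ?_ ?_) ?_ <;> rw [key] <;>
    refine Finset.prod_le_prod (fun w _ => pow_nonneg (w.1.nonneg _) _) (fun w _ => ?_)
  · exact le_max_of_le_left (le_max_left _ _)
  · exact le_max_of_le_left (le_max_right _ _)
  · exact le_max_right _ _
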